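/- arXiv:2212.10004 — 8 statements merged into one kernel-verified Lean document; each statement's English description precedes it below -/
import Mathlib

section
/- If G is a finite simple graph with no universal vertex (no vertex adjacent to all other vertices) and minimum degree δ(G) ≥ 1, then C(G) ≥ δ(G) + 2. -/
open Finset

/-- `S` is a dominating set of `G`: every vertex outside `S` has a neighbor in `S`. -/
def Dominates {V : Type*} (G : SimpleGraph V) (S : Finset V) : Prop :=
  ∀ v ∉ S, ∃ u ∈ S, G.Adj u v

/-- Two disjoint non-dominating sets whose union dominates form a coalition. -/
def FormsCoalition {V : Type*} [DecidableEq V] (G : SimpleGraph V) (X Y : Finset V) : Prop :=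
  ¬ Dominates G X ∧ ¬ Dominates G Y ∧ Dominates G (X ∪ Y)

/-- A coalition partition: every class is a singleton dominating set, or is a
non-dominating set forming a coalition with another class. -/
def IsCoalitionPartition {V : Type*} [Fintype V] [DecidableEq V] (G : SimpleGraph V)
    (π : Finpartition (univ : Finset V)) : Prop :=
  ∀ X ∈ π.parts, (X.card = 1 ∧ Dominates G X) ∨
    (¬ Dominates G X ∧ ∃ Y ∈ π.parts, Y ≠ X ∧ ¬ Dominates G Y ∧ Dominates G (X ∪ Y))

/-- The coalition number: the maximum order of a coalition partition. -/
noncomputable def coalitionNumber (V : Type*) [Fintype V] [DecidableEq V]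
    (G : SimpleGraph V) : ℕ :=
  sSup {k | ∃ π : Finpartition (univ : Finset V), IsCoalitionPartition G π ∧ π.parts.card = k}

theorem stmt1 {V : Type*} [Fintype V] [DecidableEq V] (G : SimpleGraph V) [DecidableRel G.Adj]
    (hnofull : ∀ v : V, ∃ u : V, u ≠ v ∧ ¬ G.Adj v u) (hδ : 1 ≤ G.minDegree) :
    G.minDegree + 2 ≤ coalitionNumber V G := by
  have hne : Nonempty V := by
    by_contra h
    rw [not_nonempty_iff] at h
    have : G.minDegree = 0 := by
      simp [SimpleGraph.minDegree, Finset.univ_eq_empty]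
    omega
  obtain ⟨v, hv⟩ := G.exists_minimal_degree_vertex
  set δ := G.minDegree with hδdef
  set N := G.neighborFinset v with hN
  have hNcard : N.card = δ := by rw [hv, hN]; exact G.card_neighborFinset_eq_degree v
  set R : Finset V := univ \ insert v N with hR
  have hvN : v ∉ N := by simp [hN]
  have hmemR : ∀ x : V, x ∈ R ↔ x ≠ v ∧ x ∉ N := by
    intro x; simp [hR, not_or]
  obtain ⟨w₀, hw₀v, hw₀adj⟩ := hnofull v
  have hw₀R : w₀ ∈ R := (hmemR w₀).2 ⟨hw₀v, by simp [hN, hw₀adj]⟩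
  have hRne : R.Nonempty := ⟨w₀, hw₀R⟩
  -- the part function
  set f : V → Finset V := fun x => if x = v then {v} else if x ∈ N then {x} else R with hf
  have hfx : ∀ x : V, x ∈ f x := by
    intro x
    by_cases h1 : x = v
    · simp [hf, h1]
    · by_cases h2 : x ∈ N
      · simp [hf, h1, h2]
      · simp only [hf, if_neg h1, if_neg h2]
        exact (hmemR x).2 ⟨h1, h2⟩
  have hpart : ∀ a x : V, x ∈ f a → f x = f a := by
    intro a x hx
    by_cases h1 : a = v
    · simp only [hf, if_pos h1, mem_singleton] at hx
      simp [hf, hx, h1]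
    · by_cases h2 : a ∈ N
      · simp only [hf, if_neg h1, if_pos h2, mem_singleton] at hx
        subst hx; rfl
      · simp only [hf, if_neg h1, if_neg h2] at hx
        obtain ⟨hx1, hx2⟩ := (hmemR x).1 hx
        simp [hf, hx1, hx2, h1, h2]
  -- build the partition
  have hsupIndep : (univ.image f).SupIndep id := by
    rw [Finset.supIndep_iff_pairwiseDisjoint]
    intro X hX Y hY hXY
    simp only [Finset.coe_image, Set.mem_image] at hX hY
    obtain ⟨a, -, rfl⟩ := hX
    obtain ⟨b, -, rfl⟩ := hY
    simp only [Function.onFun, id_eq]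
    rw [Finset.disjoint_left]
    intro x hxa hxb
    exact hXY ((hpart a x hxa) ▸ (hpart b x hxb) ▸ rfl)
  have hsup : (univ.image f).sup id = univ := by
    apply Finset.Subset.antisymm
    · exact fun y _ => mem_univ y
    · intro y _
      rw [Finset.mem_sup]
      exact ⟨f y, Finset.mem_image_of_mem f (mem_univ y), hfx y⟩
  have hnotbot : ⊥ ∉ univ.image f := by
    rw [Finset.mem_image]
    rintro ⟨a, -, ha⟩
    have h1 := hfx a
    rw [ha] at h1
    simp at h1
  set π : Finpartition (univ : Finset V) := ⟨univ.image f, hsupIndep, hsup, hnotbot⟩ with hπ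
  have hparts : π.parts = insert {v} (insert R (N.image fun u => ({u} : Finset V))) := by
    ext X
    simp only [hπ, Finset.mem_image, Finset.mem_insert]
    constructor
    · rintro ⟨a, -, rfl⟩
      by_cases h1 : a = v
      · left; simp [hf, h1]
      · by_cases h2 : a ∈ N
        · right; right; exact ⟨a, h2, by simp [hf, h1, h2]⟩
        · right; left; simp [hf, h1, h2]
    · rintro (rfl | rfl | ⟨u, hu, rfl⟩)
      · exact ⟨v, mem_univ v, by simp [hf]⟩
      · exact ⟨w₀, mem_univ w₀, by
          simp only [hf, if_neg hw₀v, if_neg (((hmemR w₀).1 hw₀R).2)]⟩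
      · have huv : u ≠ v := fun h => hvN (h ▸ hu)
        exact ⟨u, mem_univ u, by simp [hf, huv, hu]⟩
  have hvnotR : v ∉ R := fun h => ((hmemR v).1 h).1 rfl
  have hRmem : R ∈ π.parts := by rw [hparts]; simp
  have hvmem : ({v} : Finset V) ∈ π.parts := by rw [hparts]; simp
  have hRnev : R ≠ ({v} : Finset V) := by
    intro h; exact hvnotR (h ▸ (mem_singleton_self v))
  -- non-domination facts
  have hNotDomSingle : ∀ x : V, ¬ Dominates G ({x} : Finset V) := by
    intro x hdom
    obtain ⟨u, hux, hadj⟩ := hnofull x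
    obtain ⟨y, hy, hyadj⟩ := hdom u (by simp [hux])
    rw [mem_singleton] at hy
    exact hadj (hy ▸ hyadj)
  have hNotDomR : ¬ Dominates G R := by
    intro hdom
    obtain ⟨y, hyR, hyadj⟩ := hdom v hvnotR
    refine ((hmemR y).1 hyR).2 ?_
    rw [hN, SimpleGraph.mem_neighborFinset]
    exact hyadj.symm
  -- domination facts
  have hDomVR : Dominates G ({v} ∪ R) := by
    intro x hx
    simp only [Finset.mem_union, mem_singleton, not_or] at hx
    have hxN : x ∈ N := by
      by_contra h
      exact hx.2 ((hmemR x).2 ⟨hx.1, h⟩)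
    refine ⟨v, by simp, ?_⟩
    rw [hN, SimpleGraph.mem_neighborFinset] at hxN
    exact hxN
  have hDomUR : ∀ u ∈ N, Dominates G ({u} ∪ R) := by
    intro u hu x hx
    simp only [Finset.mem_union, mem_singleton, not_or] at hx
    obtain ⟨hxu, hxR⟩ := hx
    by_cases hxv : x = v
    · subst hxv
      refine ⟨u, by simp, ?_⟩
      rw [hN, SimpleGraph.mem_neighborFinset] at hu
      exact hu.symm
    · have hxN : x ∈ N := by
        by_contra h
        exact hxR ((hmemR x).2 ⟨hxv, h⟩)
      by_contra hcon
      push_neg at hcon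
      have hsub : G.neighborFinset x ⊆ ((insert v N).erase u).erase x := by
        intro z hz
        rw [SimpleGraph.mem_neighborFinset] at hz
        have hadj : G.Adj x z := hz
        have hzu : z ≠ u := by
          rintro rfl
          exact hcon z (by simp) hadj.symm
        have hzR : z ∉ R := fun h => hcon z (Finset.mem_union_right _ h) hadj.symm
        have hzN : z ∈ insert v N := by
          by_contra h
          exact hzR ((hmemR z).2 ⟨fun h' => h (h' ▸ mem_insert_self v N),
            fun h' => h (mem_insert_of_mem h')⟩)
        exact Finset.mem_erase.2 ⟨hadj.ne', Finset.mem_erase.2 ⟨hzu, hzN⟩⟩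
      have hcard1 : (insert v N).card = δ + 1 := by
        rw [Finset.card_insert_of_notMem hvN, hNcard]
      have hcard2 : (((insert v N).erase u).erase x).card = δ + 1 - 1 - 1 := by
        rw [Finset.card_erase_of_mem, Finset.card_erase_of_mem (mem_insert_of_mem hu), hcard1]
        exact Finset.mem_erase.2 ⟨hxu, mem_insert_of_mem hxN⟩
      have hdeg : δ ≤ G.degree x := G.minDegree_le_degree x
      have hdeg2 : G.degree x ≤ δ + 1 - 1 - 1 := by
        rw [← G.card_neighborFinset_eq_degree x, ← hcard2]
        exact Finset.card_le_card hsub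
      omega
  -- coalition partition
  have hcp : IsCoalitionPartition G π := by
    intro X hX
    right
    rw [hparts] at hX
    simp only [Finset.mem_insert, Finset.mem_image] at hX
    rcases hX with rfl | rfl | ⟨u, hu, rfl⟩
    · exact ⟨hNotDomSingle v, R, hRmem, hRnev, hNotDomR, hDomVR⟩
    · refine ⟨hNotDomR, {v}, hvmem, fun h => hRnev h.symm, hNotDomSingle v, ?_⟩
      rwa [Finset.union_comm]
    · have hunotR : u ∉ R := fun h => ((hmemR u).1 h).2 hu
      have hRneu : R ≠ ({u} : Finset V) := fun h => hunotR (h ▸ mem_singleton_self u)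
      exact ⟨hNotDomSingle u, R, hRmem, hRneu, hNotDomR, hDomUR u hu⟩
  -- count parts
  have himgcard : (N.image fun u => ({u} : Finset V)).card = δ := by
    rw [Finset.card_image_of_injective _ (fun a b h => Finset.singleton_inj.1 h), hNcard]
  have hvnotin : ({v} : Finset V) ∉ insert R (N.image fun u => ({u} : Finset V)) := by
    simp only [Finset.mem_insert, Finset.mem_image, not_or]
    refine ⟨fun h => hRnev h.symm, ?_⟩
    rintro ⟨u, hu, h⟩
    exact hvN ((Finset.singleton_inj.1 h) ▸ hu)
  have hRnotin : R ∉ (N.image fun u => ({u} : Finset V)) := by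
    simp only [Finset.mem_image]
    rintro ⟨u, hu, h⟩
    exact ((hmemR u).1 (h ▸ mem_singleton_self u)).2 hu
  have hcard : π.parts.card = δ + 2 := by
    rw [hparts, Finset.card_insert_of_notMem hvnotin,
      Finset.card_insert_of_notMem hRnotin, himgcard]
  -- conclude
  have hmemS : δ + 2 ∈ {k | ∃ π : Finpartition (univ : Finset V),
      IsCoalitionPartition G π ∧ π.parts.card = k} := ⟨π, hcp, hcard⟩
  have hbdd : BddAbove {k | ∃ π : Finpartition (univ : Finset V),
      IsCoalitionPartition G π ∧ π.parts.card = k} := by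
    refine ⟨Fintype.card (Finset V), ?_⟩
    rintro k ⟨π', -, rfl⟩
    exact Finset.card_le_univ π'.parts
  exact le_csSup hbdd hmemS
end

section
/- For any finite simple graph G with maximum degree Δ(G), the coalition number satisfies C(G) ≤ (Δ(G)+3)²/4. -/
open Finset

/-- Every finite isolate-free symmetric relation on `P` admits a spanning star forest:
a set `C` of centers, every non-center is assigned an adjacent center, and every
center receives at least one leaf. -/
lemma star_forest {α : Type*} [DecidableEq α] (R : α → α → Prop)
    (hsym : ∀ {x y}, R x y → R y x) :
    ∀ P : Finset α, (∀ x ∈ P, ∃ y ∈ P, y ≠ x ∧ R x y) →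
      ∃ (C : Finset α) (f : α → α), C ⊆ P ∧
        (∀ x ∈ P, x ∉ C → f x ∈ C ∧ R x (f x)) ∧
        (∀ y ∈ C, ∃ x ∈ P, x ∉ C ∧ f x = y) := by
  classical
  intro P
  induction P using Finset.strongInductionOn with
  | _ P ih =>
    intro hfree
    rcases P.eq_empty_or_nonempty with rfl | ⟨x₀, hx₀⟩
    · exact ⟨∅, id, by simp, by simp, by simp⟩
    obtain ⟨y₀, hy₀P, hy₀ne, hR⟩ := hfree x₀ hx₀
    set Q : Finset α := P \ {x₀, y₀} with hQdef
    have hx₀Q : x₀ ∉ Q := by simp [hQdef]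
    have hy₀Q : y₀ ∉ Q := by simp [hQdef]
    have hQsub : Q ⊆ P := sdiff_subset
    set A : Finset α := Q.filter (fun z => ¬ ∃ w ∈ Q, w ≠ z ∧ R z w) with hAdef
    set P' : Finset α := Q \ A with hP'def
    have hP'Q : P' ⊆ Q := sdiff_subset
    have hAQ : A ⊆ Q := filter_subset _ _
    have horph : ∀ z ∈ A, R z x₀ ∨ R z y₀ := by
      intro z hz
      have hzQ : z ∈ Q := hAQ hz
      have hznoQ : ¬ ∃ w ∈ Q, w ≠ z ∧ R z w := (mem_filter.mp hz).2
      obtain ⟨w, hwP, hwne, hRzw⟩ := hfree z (hQsub hzQ)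
      have hwQ : w ∉ Q := fun hwQ => hznoQ ⟨w, hwQ, hwne, hRzw⟩
      have hw2 : w = x₀ ∨ w = y₀ := by
        by_contra hcon
        push_neg at hcon
        exact hwQ (by simp [hQdef, hwP, hcon.1, hcon.2])
      rcases hw2 with rfl | rfl
      · exact Or.inl hRzw
      · exact Or.inr hRzw
    have hfree' : ∀ z ∈ P', ∃ w ∈ P', w ≠ z ∧ R z w := by
      intro z hz
      have hzQ : z ∈ Q := hP'Q hz
      have hzA : z ∉ A := (mem_sdiff.mp hz).2
      have hex : ∃ w ∈ Q, w ≠ z ∧ R z w := by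
        by_contra hcon
        exact hzA (mem_filter.mpr ⟨hzQ, hcon⟩)
      obtain ⟨w, hwQ, hwne, hRzw⟩ := hex
      have hwA : w ∉ A := by
        intro hwA
        exact (mem_filter.mp hwA).2 ⟨z, hzQ, fun h => hwne h.symm, hsym hRzw⟩
      exact ⟨w, mem_sdiff.mpr ⟨hwQ, hwA⟩, hwne, hRzw⟩
    have hss : P' ⊂ P :=
      (Finset.ssubset_iff_of_subset (hP'Q.trans hQsub)).mpr
        ⟨x₀, hx₀, fun h => hx₀Q (hP'Q h)⟩
    obtain ⟨C', f', hC'sub, hleaf', hsurj'⟩ := ih P' hss hfree'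
    have hC'P' : C' ⊆ P' := hC'sub
    have hx₀P' : x₀ ∉ P' := fun h => hx₀Q (hP'Q h)
    have hy₀P' : y₀ ∉ P' := fun h => hy₀Q (hP'Q h)
    have hx₀C' : x₀ ∉ C' := fun h => hx₀P' (hC'P' h)
    have hy₀C' : y₀ ∉ C' := fun h => hy₀P' (hC'P' h)
    have hAP' : ∀ z ∈ A, z ∉ P' := fun z hz h => (mem_sdiff.mp h).2 hz
    have hAx₀ : ∀ z ∈ A, z ≠ x₀ := fun z hz h => hx₀Q (h ▸ hAQ hz)
    have hAy₀ : ∀ z ∈ A, z ≠ y₀ := fun z hz h => hy₀Q (h ▸ hAQ hz)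
    have hAC' : ∀ z ∈ A, z ∉ C' := fun z hz h => (hAP' z hz) (hC'P' h)
    have hP'A : ∀ z ∈ P', z ∉ A := fun z hz => (mem_sdiff.mp hz).2
    have hP'x₀ : ∀ z ∈ P', z ≠ x₀ := fun z hz h => hx₀P' (h ▸ hz)
    have hP'y₀ : ∀ z ∈ P', z ≠ y₀ := fun z hz h => hy₀P' (h ▸ hz)
    have hPdec : ∀ z ∈ P, z = x₀ ∨ z = y₀ ∨ z ∈ A ∨ z ∈ P' := by
      intro z hz
      by_cases h1 : z = x₀
      · exact Or.inl h1
      by_cases h2 : z = y₀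
      · exact Or.inr (Or.inl h2)
      have hzQ : z ∈ Q := by simp [hQdef, hz, h1, h2]
      by_cases h3 : z ∈ A
      · exact Or.inr (Or.inr (Or.inl h3))
      · exact Or.inr (Or.inr (Or.inr (mem_sdiff.mpr ⟨hzQ, h3⟩)))
    by_cases hAll : ∀ z ∈ A, R z x₀
    · -- all orphans attach to x₀; y₀ is a leaf of x₀ too
      refine ⟨insert x₀ C', fun z => if z ∈ insert y₀ A then x₀ else f' z, ?_, ?_, ?_⟩
      · intro t ht
        rcases mem_insert.mp ht with rfl | ht'
        · exact hx₀
        · exact hQsub (hP'Q (hC'P' ht'))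
      · intro x hxP hxC
        have hxx₀ : x ≠ x₀ := fun h => hxC (h ▸ mem_insert_self _ _)
        rcases hPdec x hxP with rfl | rfl | hA | hP'
        · exact absurd rfl hxx₀
        · dsimp only
          rw [if_pos (mem_insert_self _ _)]
          exact ⟨mem_insert_self _ _, hsym hR⟩
        · dsimp only
          rw [if_pos (mem_insert_of_mem hA)]
          exact ⟨mem_insert_self _ _, hAll x hA⟩
        · have hnot : x ∉ insert y₀ A := by
            rw [mem_insert]
            push_neg
            exact ⟨hP'y₀ x hP', hP'A x hP'⟩
          dsimp only
          rw [if_neg hnot]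
          have hxC' : x ∉ C' := fun h => hxC (mem_insert_of_mem h)
          obtain ⟨h1, h2⟩ := hleaf' x hP' hxC'
          exact ⟨mem_insert_of_mem h1, h2⟩
      · intro y hy
        rcases mem_insert.mp hy with rfl | hy'
        · refine ⟨y₀, hy₀P, ?_, ?_⟩
          · rw [mem_insert]
            push_neg
            exact ⟨hy₀ne, hy₀C'⟩
          · dsimp only
            rw [if_pos (mem_insert_self _ _)]
        · obtain ⟨x, hxP', hxC', hfx⟩ := hsurj' y hy'
          refine ⟨x, hQsub (hP'Q hxP'), ?_, ?_⟩
          · rw [mem_insert]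
            push_neg
            exact ⟨hP'x₀ x hxP', hxC'⟩
          · have hnot : x ∉ insert y₀ A := by
              rw [mem_insert]
              push_neg
              exact ⟨hP'y₀ x hxP', hP'A x hxP'⟩
            dsimp only
            rw [if_neg hnot]
            exact hfx
    · push_neg at hAll
      obtain ⟨z₀, hz₀A, hz₀nx⟩ := hAll
      have hz₀y : R z₀ y₀ := (horph z₀ hz₀A).resolve_left hz₀nx
      set Ax : Finset α := A.filter (fun z => R z x₀) with hAxdef
      by_cases hAx : Ax.Nonempty
      · -- both x₀ and y₀ are centers
        obtain ⟨z₁, hz₁Ax⟩ := hAx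
        have hz₁A : z₁ ∈ A := mem_of_mem_filter _ hz₁Ax
        have hz₁x : R z₁ x₀ := (mem_filter.mp hz₁Ax).2
        have hz₀Ax : z₀ ∉ Ax := fun h => hz₀nx (mem_filter.mp h).2
        refine ⟨insert x₀ (insert y₀ C'),
          fun z => if z ∈ Ax then x₀ else if z ∈ A then y₀ else f' z, ?_, ?_, ?_⟩
        · intro t ht
          rcases mem_insert.mp ht with rfl | ht'
          · exact hx₀
          rcases mem_insert.mp ht' with rfl | ht''
          · exact hy₀P
          · exact hQsub (hP'Q (hC'P' ht''))
        · intro x hxP hxC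
          have hxx₀ : x ≠ x₀ := fun h => hxC (h ▸ mem_insert_self _ _)
          have hxy₀ : x ≠ y₀ := fun h => hxC (h ▸ mem_insert_of_mem (mem_insert_self _ _))
          rcases hPdec x hxP with rfl | rfl | hA | hP'
          · exact absurd rfl hxx₀
          · exact absurd rfl hxy₀
          · by_cases hRx : x ∈ Ax
            · dsimp only
              rw [if_pos hRx]
              exact ⟨mem_insert_self _ _, (mem_filter.mp hRx).2⟩
            · dsimp only
              rw [if_neg hRx, if_pos hA]
              refine ⟨mem_insert_of_mem (mem_insert_self _ _), ?_⟩
              refine (horph x hA).resolve_left ?_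
              intro hcon
              exact hRx (mem_filter.mpr ⟨hA, hcon⟩)
          · have hxA : x ∉ A := hP'A x hP'
            have hxAx : x ∉ Ax := fun h => hxA (mem_of_mem_filter _ h)
            dsimp only
            rw [if_neg hxAx, if_neg hxA]
            have hxC' : x ∉ C' := fun h => hxC (mem_insert_of_mem (mem_insert_of_mem h))
            obtain ⟨h1, h2⟩ := hleaf' x hP' hxC'
            exact ⟨mem_insert_of_mem (mem_insert_of_mem h1), h2⟩
        · intro y hy
          rcases mem_insert.mp hy with rfl | hy'
          · refine ⟨z₁, hQsub (hAQ hz₁A), ?_, by dsimp only; rw [if_pos hz₁Ax]⟩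
            rw [mem_insert, mem_insert]
            push_neg
            exact ⟨hAx₀ z₁ hz₁A, hAy₀ z₁ hz₁A, hAC' z₁ hz₁A⟩
          rcases mem_insert.mp hy' with rfl | hy''
          · refine ⟨z₀, hQsub (hAQ hz₀A), ?_, by dsimp only; rw [if_neg hz₀Ax, if_pos hz₀A]⟩
            rw [mem_insert, mem_insert]
            push_neg
            exact ⟨hAx₀ z₀ hz₀A, hAy₀ z₀ hz₀A, hAC' z₀ hz₀A⟩
          · obtain ⟨x, hxP', hxC', hfx⟩ := hsurj' y hy''
            have hxA : x ∉ A := hP'A x hxP'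
            have hxAx : x ∉ Ax := fun h => hxA (mem_of_mem_filter _ h)
            refine ⟨x, hQsub (hP'Q hxP'), ?_, ?_⟩
            · rw [mem_insert, mem_insert]
              push_neg
              exact ⟨hP'x₀ x hxP', hP'y₀ x hxP', hxC'⟩
            · dsimp only
              rw [if_neg hxAx, if_neg hxA]
              exact hfx
      · -- nobody is attached to x₀: y₀ the center, x₀ a leaf of y₀
        have hAy : ∀ z ∈ A, R z y₀ := by
          intro z hz
          refine (horph z hz).resolve_left ?_
          intro hcon
          exact hAx ⟨z, mem_filter.mpr ⟨hz, hcon⟩⟩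
        refine ⟨insert y₀ C', fun z => if z ∈ insert x₀ A then y₀ else f' z, ?_, ?_, ?_⟩
        · intro t ht
          rcases mem_insert.mp ht with rfl | ht'
          · exact hy₀P
          · exact hQsub (hP'Q (hC'P' ht'))
        · intro x hxP hxC
          have hxy₀ : x ≠ y₀ := fun h => hxC (h ▸ mem_insert_self _ _)
          rcases hPdec x hxP with rfl | rfl | hA | hP'
          · dsimp only
            rw [if_pos (mem_insert_self _ _)]
            exact ⟨mem_insert_self _ _, hR⟩
          · exact absurd rfl hxy₀
          · dsimp only
            rw [if_pos (mem_insert_of_mem hA)]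
            exact ⟨mem_insert_self _ _, hAy x hA⟩
          · have hnot : x ∉ insert x₀ A := by
              rw [mem_insert]
              push_neg
              exact ⟨hP'x₀ x hP', hP'A x hP'⟩
            dsimp only
            rw [if_neg hnot]
            have hxC' : x ∉ C' := fun h => hxC (mem_insert_of_mem h)
            obtain ⟨h1, h2⟩ := hleaf' x hP' hxC'
            exact ⟨mem_insert_of_mem h1, h2⟩
        · intro y hy
          rcases mem_insert.mp hy with rfl | hy'
          · refine ⟨x₀, hx₀, ?_, ?_⟩
            · rw [mem_insert]
              push_neg
              exact ⟨fun h => hy₀ne h.symm, hx₀C'⟩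
            · dsimp only
              rw [if_pos (mem_insert_self _ _)]
          · obtain ⟨x, hxP', hxC', hfx⟩ := hsurj' y hy'
            refine ⟨x, hQsub (hP'Q hxP'), ?_, ?_⟩
            · rw [mem_insert]
              push_neg
              exact ⟨hP'y₀ x hxP', hxC'⟩
            · have hnot : x ∉ insert x₀ A := by
                rw [mem_insert]
                push_neg
                exact ⟨hP'x₀ x hxP', hP'A x hxP'⟩
              dsimp only
              rw [if_neg hnot]
              exact hfx

theorem stmt2 {V : Type*} [Fintype V] [DecidableEq V] (G : SimpleGraph V) [DecidableRel G.Adj] :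
    (coalitionNumber V G : ℝ) ≤ ((G.maxDegree : ℝ) + 3) ^ 2 / 4 := by
  classical
  set Δ := G.maxDegree with hΔdef
  have key : ∀ π : Finpartition (univ : Finset V), IsCoalitionPartition G π →
      4 * π.parts.card ≤ (Δ + 3) ^ 2 := by
    intro π hπ
    by_cases hdom : ∃ X ∈ π.parts, Dominates G X
    · -- some class dominates: it is a singleton, so |V| ≤ Δ + 1
      obtain ⟨X, hX, hXdom⟩ := hdom
      have hcard1 : X.card = 1 := by
        rcases hπ X hX with ⟨h1, _⟩ | ⟨h1, _⟩
        · exact h1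
        · exact absurd hXdom h1
      obtain ⟨x, hXx⟩ := Finset.card_eq_one.mp hcard1
      have hadj : ∀ v, v ≠ x → G.Adj x v := by
        intro v hv
        obtain ⟨u, hu, huv⟩ := hXdom v (by simp [hXx, hv])
        rw [hXx, mem_singleton] at hu
        exact hu ▸ huv
      have hsub : univ.erase x ⊆ G.neighborFinset x := by
        intro v hv
        rw [SimpleGraph.mem_neighborFinset]
        exact hadj v (Finset.ne_of_mem_erase hv)
      have hdeg : Fintype.card V - 1 ≤ G.degree x := by
        have h := Finset.card_le_card hsub
        rwa [Finset.card_erase_of_mem (mem_univ x), Finset.card_univ,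
          SimpleGraph.card_neighborFinset_eq_degree] at h
      have hn : Fintype.card V ≤ Δ + 1 := by
        have h1 : 1 ≤ Fintype.card V := Fintype.card_pos_iff.mpr ⟨x⟩
        have h2 := G.degree_le_maxDegree x
        omega
      have hk : π.parts.card ≤ Fintype.card V := by
        simpa using π.card_parts_le_card
      nlinarith [hk, hn, sq_nonneg (Δ + 1)]
    · push_neg at hdom
      rcases π.parts.eq_empty_or_nonempty with hempty | hne
      · simp [hempty]
      have hM : ∀ X ∈ π.parts, ∃ Y ∈ π.parts, Y ≠ X ∧ Dominates G (X ∪ Y) := by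
        intro X hX
        rcases hπ X hX with ⟨_, h2⟩ | ⟨_, Y, hY, hne', _, hd⟩
        · exact absurd h2 (hdom X hX)
        · exact ⟨Y, hY, hne', hd⟩
      have hsym : ∀ {X Y : Finset V}, Dominates G (X ∪ Y) → Dominates G (Y ∪ X) := by
        intro X Y h
        rwa [Finset.union_comm]
      obtain ⟨C, f, hCsub, hleaf, hsurj⟩ :=
        star_forest (fun X Y => Dominates G (X ∪ Y)) hsym π.parts hM
      set ℓ := C.card with hℓdef
      have hdisj : ∀ W₁ ∈ π.parts, ∀ W₂ ∈ π.parts, W₁ ≠ W₂ → Disjoint W₁ W₂ := by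
        intro W₁ h1 W₂ h2 hne'
        exact π.supIndep.pairwiseDisjoint h1 h2 hne'
      have row : ∀ Y₀ ∈ C,
          ((π.parts \ C).filter (fun X => f X = Y₀)).card + ℓ ≤ Δ + 2 := by
        intro Y₀ hY₀
        have hY₀parts : Y₀ ∈ π.parts := hCsub hY₀
        have hY₀nd : ¬ Dominates G Y₀ := hdom Y₀ hY₀parts
        simp only [Dominates, not_forall] at hY₀nd
        obtain ⟨u, huY₀, hund⟩ := hY₀nd
        push_neg at hund
        set NB : Finset V := insert u (G.neighborFinset u) with hNBdef
        have hNBcard : NB.card ≤ Δ + 1 := by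
          have h1 : NB.card ≤ (G.neighborFinset u).card + 1 := Finset.card_insert_le _ _
          have h2 : (G.neighborFinset u).card = G.degree u :=
            SimpleGraph.card_neighborFinset_eq_degree G u
          have h3 := G.degree_le_maxDegree u
          omega
        have hhit : ∀ A B : Finset V, Dominates G (B ∪ A) →
            u ∉ A → (∀ w ∈ A, ¬ G.Adj w u) → (B ∩ NB).Nonempty := by
          intro A B hd huA hwA
          by_cases huB : u ∈ B
          · exact ⟨u, mem_inter.mpr ⟨huB, mem_insert_self _ _⟩⟩
          obtain ⟨w, hw, hadj2⟩ := hd u (by simp [huA, huB])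
          rcases mem_union.mp hw with hwB | hwA'
          · refine ⟨w, mem_inter.mpr ⟨hwB, mem_insert_of_mem ?_⟩⟩
            rw [SimpleGraph.mem_neighborFinset]
            exact hadj2.symm
          · exact absurd hadj2 (hwA w hwA')
        set H : Finset (Finset V) := π.parts.filter (fun W => (W ∩ NB).Nonempty) with hHdef
        have hHcard : H.card ≤ NB.card := by
          have hpick : ∀ W ∈ H, ∃ v, v ∈ W ∩ NB := fun W hW => (mem_filter.mp hW).2
          choose pick hpick using hpick
          set g : Finset V → V := fun W => if h : W ∈ H then pick W h else u with hgdef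
          apply Finset.card_le_card_of_injOn g
          · intro W hW
            simp only [hgdef, dif_pos (Finset.mem_coe.mp hW)]
            exact (mem_inter.mp (hpick W hW)).2
          · intro W₁ h1 W₂ h2 heq
            simp only [Finset.mem_coe] at h1 h2
            simp only [hgdef, dif_pos h1, dif_pos h2] at heq
            by_contra hne'
            have hv1 : pick W₁ h1 ∈ W₁ := (mem_inter.mp (hpick W₁ h1)).1
            have hv2 : pick W₂ h2 ∈ W₂ := (mem_inter.mp (hpick W₂ h2)).1
            have hd := hdisj W₁ (mem_of_mem_filter _ h1) W₂ (mem_of_mem_filter _ h2) hne'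
            exact (Finset.disjoint_left.mp hd hv1) (heq ▸ hv2)
        have hfiberhit : ∀ Z ∈ (π.parts \ C).filter (fun X => f X = Y₀),
            (Z ∩ NB).Nonempty := by
          intro Z hZ
          have hZ1 := mem_filter.mp hZ
          have hZparts : Z ∈ π.parts := (mem_sdiff.mp hZ1.1).1
          have hZC : Z ∉ C := (mem_sdiff.mp hZ1.1).2
          have hd := (hleaf Z hZparts hZC).2
          rw [hZ1.2] at hd
          exact hhit Y₀ Z hd huY₀ hund
        have hζ : ∀ Z : Finset V, ∃ X : Finset V,
            Z ∈ C → X ∈ π.parts ∧ X ∉ C ∧ f X = Z := by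
          intro Z
          by_cases hZ : Z ∈ C
          · obtain ⟨X, hX1, hX2, hX3⟩ := hsurj Z hZ
            exact ⟨X, fun _ => ⟨hX1, hX2, hX3⟩⟩
          · exact ⟨Z, fun h => absurd h hZ⟩
        choose ζ hζspec using hζ
        set Φ : Finset V → Finset V := fun Z => if (Z ∩ NB).Nonempty then Z else ζ Z
          with hΦdef
        set D : Finset (Finset V) :=
          ((π.parts \ C).filter (fun X => f X = Y₀)) ∪ (C.erase Y₀) with hDdef
        have hDcard : D.card
            = ((π.parts \ C).filter (fun X => f X = Y₀)).card + (ℓ - 1) := by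
          rw [hDdef, Finset.card_union_of_disjoint, Finset.card_erase_of_mem hY₀]
          rw [Finset.disjoint_left]
          intro Z hZ1 hZ2
          exact (mem_sdiff.mp (mem_filter.mp hZ1).1).2 (Finset.mem_of_mem_erase hZ2)
        have hcenterleaf : ∀ Z ∈ C.erase Y₀, ¬ (Z ∩ NB).Nonempty →
            (ζ Z ∩ NB).Nonempty := by
          intro Z hZ hmiss
          have hZC : Z ∈ C := Finset.mem_of_mem_erase hZ
          obtain ⟨hζ1, hζ2, hζ3⟩ := hζspec Z hZC
          have hd := (hleaf (ζ Z) hζ1 hζ2).2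
          rw [hζ3] at hd
          refine hhit Z (ζ Z) hd ?_ ?_
          · intro huZ
            exact hmiss ⟨u, mem_inter.mpr ⟨huZ, mem_insert_self _ _⟩⟩
          · intro w hw hadj2
            refine hmiss ⟨w, mem_inter.mpr ⟨hw, mem_insert_of_mem ?_⟩⟩
            rw [SimpleGraph.mem_neighborFinset]
            exact hadj2.symm
        have hDH : D.card ≤ H.card := by
          apply Finset.card_le_card_of_injOn Φ
          · intro Z hZ
            rcases mem_union.mp hZ with hZf | hZc
            · have hh := hfiberhit Z hZf
              simp only [hΦdef, if_pos hh]
              exact mem_filter.mpr ⟨(mem_sdiff.mp (mem_filter.mp hZf).1).1, hh⟩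
            · by_cases hh : (Z ∩ NB).Nonempty
              · simp only [hΦdef, if_pos hh]
                exact mem_filter.mpr ⟨hCsub (Finset.mem_of_mem_erase hZc), hh⟩
              · simp only [hΦdef, if_neg hh]
                have hZC : Z ∈ C := Finset.mem_of_mem_erase hZc
                obtain ⟨hζ1, _, _⟩ := hζspec Z hZC
                exact mem_filter.mpr ⟨hζ1, hcenterleaf Z hZc hh⟩
          · intro Z₁ h1 Z₂ h2 heq
            simp only [Finset.mem_coe] at h1 h2
            have hfact : ∀ Z ∈ D, (Z ∈ C.erase Y₀ ∧
                Φ Z = ζ Z ∧ ζ Z ∉ C ∧ f (ζ Z) = Z) ∨ (Φ Z = Z) := by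
              intro Z hZ
              by_cases hh : (Z ∩ NB).Nonempty
              · exact Or.inr (by simp only [hΦdef, if_pos hh])
              rcases mem_union.mp hZ with hZf | hZc
              · exact absurd (hfiberhit Z hZf) hh
              · have hZC : Z ∈ C := Finset.mem_of_mem_erase hZc
                obtain ⟨hζ1, hζ2, hζ3⟩ := hζspec Z hZC
                exact Or.inl ⟨hZc, by simp only [hΦdef, if_neg hh], hζ2, hζ3⟩
            have hmemC : ∀ Z ∈ D, Z ∈ C ∨ (Z ∉ C ∧ f Z = Y₀) := by
              intro Z hZ
              rcases mem_union.mp hZ with hZf | hZc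
              · exact Or.inr ⟨(mem_sdiff.mp (mem_filter.mp hZf).1).2,
                  (mem_filter.mp hZf).2⟩
              · exact Or.inl (Finset.mem_of_mem_erase hZc)
            rcases hfact Z₁ h1 with ⟨he1, hp1, hn1, hf1⟩ | hp1 <;>
              rcases hfact Z₂ h2 with ⟨he2, hp2, hn2, hf2⟩ | hp2
            · rw [hp1, hp2] at heq
              rw [← hf1, ← hf2, heq]
            · exfalso
              rw [hp1, hp2] at heq
              rcases hmemC Z₂ h2 with hc | ⟨_, hfz⟩
              · exact hn1 (heq ▸ hc)
              · have : Z₁ = Y₀ := by rw [← hf1, heq, hfz]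
                exact (Finset.ne_of_mem_erase he1) this
            · exfalso
              rw [hp1, hp2] at heq
              rcases hmemC Z₁ h1 with hc | ⟨_, hfz⟩
              · exact hn2 (heq.symm ▸ hc)
              · have : Z₂ = Y₀ := by rw [← hf2, ← heq, hfz]
                exact (Finset.ne_of_mem_erase he2) this
            · rw [hp1, hp2] at heq
              exact heq
        have hℓpos : 1 ≤ ℓ := Finset.card_pos.mpr ⟨Y₀, hY₀⟩
        omega
      have hcount : π.parts.card = ℓ + (π.parts \ C).card := by
        rw [Finset.card_sdiff_of_subset hCsub]
        have := Finset.card_le_card hCsub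
        omega
      have hfibers : (π.parts \ C).card =
          ∑ Y ∈ C, ((π.parts \ C).filter (fun X => f X = Y)).card := by
        apply Finset.card_eq_sum_card_fiberwise
        intro X hX
        exact (hleaf X (mem_sdiff.mp hX).1 (mem_sdiff.mp hX).2).1
      have htotal : π.parts.card + ℓ * ℓ ≤ ℓ * (Δ + 3) := by
        have hsum : ∑ Y ∈ C, (((π.parts \ C).filter (fun X => f X = Y)).card + ℓ) ≤
            ∑ _Y ∈ C, (Δ + 2) := Finset.sum_le_sum row
        rw [Finset.sum_add_distrib, Finset.sum_const, Finset.sum_const, smul_eq_mul,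
          smul_eq_mul, ← hfibers] at hsum
        have hBC : ℓ * (Δ + 3) = ℓ * (Δ + 2) + ℓ := by ring
        have hℓℓ : ℓ * ℓ = C.card * ℓ := by rw [hℓdef]
        linarith [hsum, hcount]
      have hz : (4 : ℤ) * (π.parts.card : ℤ) ≤ ((Δ : ℤ) + 3) ^ 2 := by
        have h1 : (π.parts.card : ℤ) + (ℓ : ℤ) * ℓ ≤ (ℓ : ℤ) * ((Δ : ℤ) + 3) := by
          exact_mod_cast htotal
        nlinarith [sq_nonneg ((Δ : ℤ) + 3 - 2 * (ℓ : ℤ))]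
      exact_mod_cast hz
  have hub : coalitionNumber V G ≤ (Δ + 3) ^ 2 / 4 := by
    apply csSup_le'
    rintro k ⟨π, hπ, rfl⟩
    rw [Nat.le_div_iff_mul_le (by norm_num : 0 < 4)]
    have := key π hπ
    linarith
  calc (coalitionNumber V G : ℝ) ≤ (((Δ + 3) ^ 2 / 4 : ℕ) : ℝ) := Nat.cast_le.mpr hub
    _ ≤ (((Δ + 3) ^ 2 : ℕ) : ℝ) / 4 := by exact_mod_cast Nat.cast_div_le
    _ = ((Δ : ℝ) + 3) ^ 2 / 4 := by push_cast; ring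
end

section
/- Let G be a graph with maximum degree Δ(G), let π be a coalition partition of G of maximum order, and let X ∈ π. Then X forms a coalition with at most Δ(G)+1 other sets of π; that is, there are at most Δ(G)+1 sets Y ∈ π with Y ≠ X such that neither X nor Y is a dominating set but X ∪ Y is a dominating set. -/
open Finset

theorem stmt3 {V : Type*} [Fintype V] [DecidableEq V] (G : SimpleGraph V) [DecidableRel G.Adj]
    (π : Finpartition (univ : Finset V)) (hπ : IsCoalitionPartition G π)
    (hmax : π.parts.card = coalitionNumber V G) (X : Finset V) (hX : X ∈ π.parts) :
    {Y | Y ∈ π.parts ∧ Y ≠ X ∧ FormsCoalition G X Y}.ncard ≤ G.maxDegree + 1 := by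
  classical
  set S := {Y | Y ∈ π.parts ∧ Y ≠ X ∧ FormsCoalition G X Y} with hS
  by_cases hXd : Dominates G X
  · have : S = ∅ := by
      ext Y; simp only [hS, Set.mem_setOf_eq, Set.mem_empty_iff_false, iff_false]
      rintro ⟨-, -, h, -⟩; exact h hXd
    simp [this]
  · -- pick a vertex not dominated by X
    unfold Dominates at hXd; push_neg at hXd
    obtain ⟨v, hvX, hv⟩ := hXd
    set N : Finset V := insert v (G.neighborFinset v) with hN
    have hmem : ∀ Y ∈ S, (Y ∩ N).Nonempty := by
      rintro Y ⟨hYp, hYX, -, -, hdom⟩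
      by_cases hvY : v ∈ Y
      · exact ⟨v, Finset.mem_inter.2 ⟨hvY, Finset.mem_insert_self _ _⟩⟩
      · have hvXY : v ∉ X ∪ Y := by simp [hvX, hvY]
        obtain ⟨u, hu, hadj⟩ := hdom v hvXY
        rcases Finset.mem_union.1 hu with h | h
        · exact absurd hadj (hv u h)
        · exact ⟨u, Finset.mem_inter.2 ⟨h, Finset.mem_insert_of_mem
            (by simp [SimpleGraph.mem_neighborFinset, hadj.symm])⟩⟩
    set f : Finset V → V := fun Y => if h : (Y ∩ N).Nonempty then h.choose else v with hf
    have hfY : ∀ Y ∈ S, f Y ∈ Y ∩ N := by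
      intro Y hY
      have h := hmem Y hY
      simpa [hf, h] using h.choose_spec
    have hle : S.ncard ≤ (↑N : Set V).ncard := by
      apply Set.ncard_le_ncard_of_injOn f
      · intro Y hY; exact (Finset.mem_inter.1 (hfY Y hY)).2
      · intro Y hY Y' hY' heq
        exact π.eq_of_mem_parts hY.1 hY'.1 (Finset.mem_inter.1 (hfY Y hY)).1
          (heq ▸ (Finset.mem_inter.1 (hfY Y' hY')).1)
    calc S.ncard ≤ (↑N : Set V).ncard := hle
      _ = N.card := by rw [Set.ncard_coe_finset]
      _ ≤ (G.neighborFinset v).card + 1 := Finset.card_insert_le _ _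
      _ ≤ G.maxDegree + 1 := by
          simpa [SimpleGraph.card_neighborFinset_eq_degree] using
            Nat.add_le_add_right (G.degree_le_maxDegree v) 1
end

section
/- The coalition number of the complete bipartite graph K_{3,3} equals 6. -/
open Finset

instance {V W : Type*} : DecidableRel (completeBipartiteGraph V W).Adj := fun _ _ => by
  simp only [completeBipartiteGraph_adj]; infer_instance

instance {V : Type*} [Fintype V] [DecidableEq V] (G : SimpleGraph V) [DecidableRel G.Adj]
    (S : Finset V) : Decidable (Dominates G S) := by unfold Dominates; infer_instance

lemma key : ∀ a : Fin 3 ⊕ Fin 3,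
    ¬ Dominates (completeBipartiteGraph (Fin 3) (Fin 3)) {a} ∧
    ({a.swap} : Finset (Fin 3 ⊕ Fin 3)) ≠ {a} ∧
    Dominates (completeBipartiteGraph (Fin 3) (Fin 3)) ({a} ∪ {a.swap}) := by decide

theorem stmt5 : coalitionNumber (Fin 3 ⊕ Fin 3) (completeBipartiteGraph (Fin 3) (Fin 3)) = 6 := by
  have h6 : (6 : ℕ) ∈ {k | ∃ π : Finpartition (univ : Finset (Fin 3 ⊕ Fin 3)),
      IsCoalitionPartition (completeBipartiteGraph (Fin 3) (Fin 3)) π ∧ π.parts.card = k} := by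
    refine ⟨⊥, ?_, by simp [Finpartition.card_bot]⟩
    intro X hX
    rw [Finpartition.mem_bot_iff] at hX
    obtain ⟨a, -, rfl⟩ := hX
    right
    refine ⟨(key a).1, {a.swap}, ?_, (key a).2.1, (key a.swap).1, ?_⟩
    · rw [Finpartition.mem_bot_iff]; exact ⟨a.swap, mem_univ _, rfl⟩
    · exact (key a).2.2
  apply le_antisymm
  · apply csSup_le ⟨6, h6⟩
    rintro k ⟨π, -, rfl⟩
    calc π.parts.card ≤ (univ : Finset (Fin 3 ⊕ Fin 3)).card := π.card_parts_le_card
      _ = 6 := by simp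
  · apply le_csSup
    · refine ⟨6, ?_⟩
      rintro k ⟨π, -, rfl⟩
      calc π.parts.card ≤ (univ : Finset (Fin 3 ⊕ Fin 3)).card := π.card_parts_le_card
        _ = 6 := by simp
    · exact h6
end

section
/- If G is a cubic graph (3-regular) of order n ≥ 6 with domination number at least 3 and a coalition partition π of G consists of one class of size 2 and n−2 singleton classes, then n−2 ≤ 4; in particular no cubic graph of order 10 with domination number at least 3 admits a coalition partition into one doubleton and eight singletons. -/
open Finset

theorem stmt12 {V : Type*} [Fintype V] [DecidableEq V] (G : SimpleGraph V) [DecidableRel G.Adj]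
    [DecidableRel G.Adj] (hreg : G.IsRegularOfDegree 3) (n : ℕ) (hn : Fintype.card V = n) (h6 : 6 ≤ n)
    (hγ : ∀ S : Finset V, Dominates G S → 3 ≤ S.card)
    (π : Finpartition (univ : Finset V)) (hπ : IsCoalitionPartition G π)
    (X : Finset V) (hX : X ∈ π.parts) (hX2 : X.card = 2)
    (hsing : ∀ Y ∈ π.parts, Y ≠ X → Y.card = 1) (hcount : π.parts.card = n - 1) :
    n - 2 ≤ 4 := by
  -- X is not dominating since |X| = 2 < 3
  have hXnd : ¬ Dominates G X := fun h => by have := hγ X h; omega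
  rw [Dominates] at hXnd
  push_neg at hXnd
  obtain ⟨w, hwX, hw⟩ := hXnd
  set N : Finset V := insert w (G.neighborFinset w) with hNdef
  have hNcard : N.card ≤ 4 := by
    rw [hNdef]
    have h1 := Finset.card_insert_le w (G.neighborFinset w)
    have h3 : (G.neighborFinset w).card = 3 := by
      rw [G.card_neighborFinset_eq_degree]; exact hreg w
    omega
  -- map each singleton class to its element, landing in N
  have key : (π.parts.erase X).card ≤ N.card := by
    apply Finset.card_le_card_of_injOn
      (fun Y => if h : Y.Nonempty then h.choose else w)
    · intro Y hY
      have hYmem : Y ∈ π.parts := Finset.mem_of_mem_erase hY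
      have hYne : Y ≠ X := Finset.ne_of_mem_erase hY
      have hY1 : Y.card = 1 := hsing Y hYmem hYne
      have hne : Y.Nonempty := Finset.card_pos.mp (by omega)
      set a : V := hne.choose with hadef
      have hamem : a ∈ Y := hne.choose_spec
      have ha : Y = {a} := Finset.eq_singleton_iff_unique_mem.mpr
        ⟨hamem, fun b hb => Finset.card_le_one.mp (le_of_eq hY1) b hb a hamem⟩
      have hfa : (if h : Y.Nonempty then h.choose else w) = a := dif_pos hne
      change (if h : Y.Nonempty then h.choose else w) ∈ (N : Set V)
      rw [hfa]
      -- Y is not dominating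
      have hYnd : ¬ Dominates G Y := fun h => by have := hγ Y h; omega
      rcases hπ Y hYmem with ⟨_, hd⟩ | ⟨_, Z, hZmem, hZne, hZnd, hdom⟩
      · exact absurd hd hYnd
      · have hZX : Z = X := by
          by_contra hne'
          have hZ1 : Z.card = 1 := hsing Z hZmem hne'
          have hc : (Y ∪ Z).card ≤ 2 := by
            calc (Y ∪ Z).card ≤ Y.card + Z.card := Finset.card_union_le _ _
            _ = 2 := by omega
          have := hγ _ hdom
          omega
        rw [hZX] at hdom
        -- Dominates G (Y ∪ X), Y = {a}
        by_cases hwm : w ∈ Y ∪ X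
        · have : w = a ∨ w ∈ X := by
            rcases Finset.mem_union.mp hwm with h | h
            · left; rw [ha] at h; exact Finset.mem_singleton.mp h
            · right; exact h
          rcases this with h | h
          · rw [← h]; exact Finset.mem_insert_self _ _
          · exact absurd h hwX
        · obtain ⟨u, hu, hadj⟩ := hdom w hwm
          rcases Finset.mem_union.mp hu with h | h
          · rw [ha] at h
            have : u = a := Finset.mem_singleton.mp h
            subst this
            exact Finset.mem_insert_of_mem (by
              rw [SimpleGraph.mem_neighborFinset]; exact hadj.symm)
          · exact absurd hadj (hw u h)
    · intro Y hY Y' hY' hf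
      rw [Finset.mem_coe, Finset.mem_erase] at hY hY'
      have hY1 : Y.card = 1 := hsing Y hY.2 hY.1
      have hY'1 : Y'.card = 1 := hsing Y' hY'.2 hY'.1
      have hne : Y.Nonempty := Finset.card_pos.mp (by omega)
      have hne' : Y'.Nonempty := Finset.card_pos.mp (by omega)
      have ha : Y = {hne.choose} := Finset.eq_singleton_iff_unique_mem.mpr
        ⟨hne.choose_spec, fun b hb =>
          Finset.card_le_one.mp (le_of_eq hY1) b hb _ hne.choose_spec⟩
      have ha' : Y' = {hne'.choose} := Finset.eq_singleton_iff_unique_mem.mpr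
        ⟨hne'.choose_spec, fun b hb =>
          Finset.card_le_one.mp (le_of_eq hY'1) b hb _ hne'.choose_spec⟩
      simp only [dif_pos hne, dif_pos hne'] at hf
      rw [ha, ha', hf]
  have herase : (π.parts.erase X).card = π.parts.card - 1 :=
    Finset.card_erase_of_mem hX
  omega
end

section
/- For every cubic graph G, 5 ≤ C(G) ≤ 9. -/
open Finset

namespace CoalitionAux

variable {V : Type*} [Fintype V] [DecidableEq V] (G : SimpleGraph V) [DecidableRel G.Adj]

/-- Closed neighborhood as a finset. -/
def Nc (x : V) : Finset V := insert x (G.neighborFinset x)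

lemma card_Nc (hreg : G.IsRegularOfDegree 3) (x : V) : (Nc G x).card = 4 := by
  rw [Nc, card_insert_of_notMem (SimpleGraph.notMem_neighborFinset_self G x),
    SimpleGraph.card_neighborFinset_eq_degree, hreg x]

lemma dom_meets {S : Finset V} (h : Dominates G S) (x : V) :
    (S ∩ Nc G x).Nonempty := by
  by_cases hx : x ∈ S
  · exact ⟨x, mem_inter.2 ⟨hx, mem_insert_self _ _⟩⟩
  · obtain ⟨u, hu, hadj⟩ := h x hx
    exact ⟨u, mem_inter.2 ⟨hu, mem_insert_of_mem
      ((SimpleGraph.mem_neighborFinset G x u).2 hadj.symm)⟩⟩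

lemma not_dom_witness {S : Finset V} (h : ¬ Dominates G S) :
    ∃ x, S ∩ Nc G x = ∅ := by
  rw [Dominates] at h
  push_neg at h
  obtain ⟨x, hx, hall⟩ := h
  refine ⟨x, eq_empty_iff_forall_notMem.2 fun e he => ?_⟩
  rw [mem_inter, Nc, mem_insert] at he
  obtain ⟨heS, heq | hnb⟩ := he
  · exact hx (heq ▸ heS)
  · exact hall e heS ((SimpleGraph.mem_neighborFinset G x e).1 hnb).symm

lemma parts_struct (hreg : G.IsRegularOfDegree 3) (h6 : 6 ≤ Fintype.card V)
    {π : Finpartition (univ : Finset V)} (hπ : IsCoalitionPartition G π) :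
    ∀ P ∈ π.parts, ¬ Dominates G P ∧
      ∃ Q ∈ π.parts, Q ≠ P ∧ ¬ Dominates G Q ∧ Dominates G (P ∪ Q) := by
  intro P hP
  rcases hπ P hP with ⟨hc1, hdom⟩ | h
  · exfalso
    obtain ⟨u, rfl⟩ := card_eq_one.1 hc1
    have hsub : univ \ {u} ⊆ G.neighborFinset u := by
      intro y hy
      rw [mem_sdiff, mem_singleton] at hy
      obtain ⟨z, hz, hadj⟩ := hdom y (by simpa using hy.2)
      rw [mem_singleton] at hz
      subst hz
      exact (SimpleGraph.mem_neighborFinset G z y).2 hadj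
    have h1 := card_le_card hsub
    rw [card_sdiff_of_subset (by simp), card_univ, card_singleton,
      SimpleGraph.card_neighborFinset_eq_degree, hreg u] at h1
    omega
  · exact h

/-- The family of parts of `π` meeting the closed neighborhood of `x`. -/
def Afam (π : Finpartition (univ : Finset V)) (x : V) : Finset (Finset V) :=
  π.parts.filter (fun P => (P ∩ Nc G x).Nonempty)

variable {π : Finpartition (univ : Finset V)}

lemma Afam_mem {P : Finset V} {x : V} :
    P ∈ Afam G π x ↔ P ∈ π.parts ∧ (P ∩ Nc G x).Nonempty := mem_filter

lemma Afam_subset (x : V) : Afam G π x ⊆ π.parts := filter_subset _ _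

lemma Afam_card (hreg : G.IsRegularOfDegree 3) (x : V) : (Afam G π x).card ≤ 4 := by
  classical
  rw [← card_Nc G hreg x]
  apply card_le_card_of_injOn (fun P => if h : (P ∩ Nc G x).Nonempty then h.choose else x)
  · intro P hP
    dsimp only
    rw [dif_pos (Afam_mem G |>.1 hP).2]
    exact (mem_inter.1 (Afam_mem G |>.1 hP).2.choose_spec).2
  · intro P hP Q hQ heq
    simp only [Finset.mem_coe] at hP hQ
    dsimp only at heq
    rw [dif_pos ((Afam_mem G).1 hP).2, dif_pos ((Afam_mem G).1 hQ).2] at heq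
    have h1 : ((Afam_mem G).1 hP).2.choose ∈ P := (mem_inter.1 ((Afam_mem G).1 hP).2.choose_spec).1
    have h2 : ((Afam_mem G).1 hQ).2.choose ∈ Q := (mem_inter.1 ((Afam_mem G).1 hQ).2.choose_spec).1
    exact π.eq_of_mem_parts ((Afam_mem G).1 hP).1 ((Afam_mem G).1 hQ).1 h1 (heq ▸ h2)

lemma Afam_empty {P : Finset V} {x : V} (hP : P ∈ π.parts) (hPx : P ∉ Afam G π x) :
    P ∩ Nc G x = ∅ := by
  by_contra h
  exact hPx ((Afam_mem G).2 ⟨hP, nonempty_iff_ne_empty.2 h⟩)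

lemma partner_in_Afam {P Q : Finset V} {x : V} (hPx : P ∩ Nc G x = ∅)
    (hdom : Dominates G (P ∪ Q)) (hQ : Q ∈ π.parts) : Q ∈ Afam G π x := by
  obtain ⟨e, he⟩ := dom_meets G hdom x
  rw [mem_inter, mem_union] at he
  rcases he with ⟨heP | heQ, heN⟩
  · exact absurd (mem_inter.2 ⟨heP, heN⟩) (by rw [hPx]; exact notMem_empty e)
  · exact (Afam_mem G).2 ⟨hQ, ⟨e, mem_inter.2 ⟨heQ, heN⟩⟩⟩

/-- A witness vertex whose closed neighborhood a given (non-dominating) set misses. -/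
noncomputable def wit [Nonempty V] (S : Finset V) : V :=
  if h : ∃ x, S ∩ Nc G x = ∅ then h.choose else Classical.arbitrary V

lemma wit_spec [Nonempty V] {S : Finset V} (h : ¬ Dominates G S) :
    S ∩ Nc G (wit G S) = ∅ := by
  have hex := not_dom_witness G h
  rw [wit, dif_pos hex]
  exact hex.choose_spec

lemma wit_not_mem [Nonempty V] {S : Finset V} (h : ¬ Dominates G S) :
    S ∉ Afam G π (wit G S) := by
  intro hmem
  have h2 := ((Afam_mem G).1 hmem).2
  rw [wit_spec G h] at h2
  exact not_nonempty_empty h2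

set_option maxHeartbeats 2000000 in
lemma upper_bound (hreg : G.IsRegularOfDegree 3) (h6 : 6 ≤ Fintype.card V)
    (hπ : IsCoalitionPartition G π) : π.parts.card ≤ 9 := by
  classical
  haveI hV : Nonempty V := Fintype.card_pos_iff.mp (by omega)
  have hfull := parts_struct G hreg h6 hπ
  have hnd : ∀ P ∈ π.parts, ¬ Dominates G P := fun P hP => (hfull P hP).1
  have cover2 : ∀ (z z' : V), ∀ P ∈ π.parts, P ∉ Afam G π z → P ∉ Afam G π z' →
      ∃ Q ∈ Afam G π z ∩ Afam G π z', Q ∈ π.parts ∧ Dominates G (P ∪ Q) := by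
    intro z z' P hP hPz hPz'
    obtain ⟨-, Q, hQ, -, -, hdom⟩ := hfull P hP
    exact ⟨Q, mem_inter.2 ⟨partner_in_Afam G (Afam_empty G hP hPz) hdom hQ,
      partner_in_Afam G (Afam_empty G hP hPz') hdom hQ⟩, hQ, hdom⟩
  by_cases h1 : ∀ z z' : V, (Afam G π z ∩ Afam G π z').Nonempty
  · by_cases h2 : ∀ z z' : V, 2 ≤ (Afam G π z ∩ Afam G π z').card
    · by_cases h3 : ∀ z z' : V, 3 ≤ (Afam G π z ∩ Afam G π z').card
      · -- every two A-families share ≥ 3 parts: total ≤ 4 + 4·1 = 8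
        have z₀ : V := Classical.arbitrary V
        have hsub : π.parts ⊆ Afam G π z₀ ∪
            (Afam G π z₀).biUnion (fun Y => Afam G π (wit G Y) \ Afam G π z₀) := by
          intro P hP
          rw [mem_union]
          by_cases hPz : P ∈ Afam G π z₀
          · exact Or.inl hPz
          · obtain ⟨-, Q, hQ, -, hQnd, hdom⟩ := hfull P hP
            have hQz : Q ∈ Afam G π z₀ := partner_in_Afam G (Afam_empty G hP hPz) hdom hQ
            have hPwQ : P ∈ Afam G π (wit G Q) := by
              apply partner_in_Afam G (wit_spec G hQnd) _ hP
              rwa [union_comm]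
            exact Or.inr (mem_biUnion.2 ⟨Q, hQz, mem_sdiff.2 ⟨hPwQ, hPz⟩⟩)
        have hone : ∀ Y : Finset V, (Afam G π (wit G Y) \ Afam G π z₀).card ≤ 1 := by
          intro Y
          have h4 := Afam_card G (π := π) hreg (wit G Y)
          have h5 := h3 (wit G Y) z₀
          have heq : (Afam G π (wit G Y) \ Afam G π z₀).card =
              (Afam G π (wit G Y)).card - (Afam G π (wit G Y) ∩ Afam G π z₀).card := by
            rw [← sdiff_inter_self_left, card_sdiff_of_subset inter_subset_left]
          omega
        calc π.parts.card ≤ (Afam G π z₀ ∪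
              (Afam G π z₀).biUnion (fun Y => Afam G π (wit G Y) \ Afam G π z₀)).card :=
              card_le_card hsub
          _ ≤ (Afam G π z₀).card +
              ((Afam G π z₀).biUnion (fun Y => Afam G π (wit G Y) \ Afam G π z₀)).card :=
              card_union_le _ _
          _ ≤ (Afam G π z₀).card + (Afam G π z₀).card * 1 := by
              refine add_le_add le_rfl (card_biUnion_le.trans ?_)
              calc ∑ Y ∈ Afam G π z₀, (Afam G π (wit G Y) \ Afam G π z₀).card
                  ≤ ∑ _Y ∈ Afam G π z₀, 1 := sum_le_sum fun Y _ => hone Y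
                _ = (Afam G π z₀).card * 1 := by rw [sum_const, smul_eq_mul]
          _ ≤ 9 := by have := Afam_card G (π := π) hreg z₀; omega
      · -- some pair shares exactly 2 parts: total ≤ 6 + 1 + 1 = 8
        push_neg at h3
        obtain ⟨z, z', hlt⟩ := h3
        have hcard2 : (Afam G π z ∩ Afam G π z').card = 2 := le_antisymm (by omega) (h2 z z')
        obtain ⟨T₁, T₂, hTne, hT⟩ := card_eq_two.1 hcard2
        have hT₁p : T₁ ∈ π.parts :=
          Afam_subset G z (mem_inter.1 (hT ▸ mem_insert_self T₁ {T₂})).1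
        have hT₂p : T₂ ∈ π.parts :=
          Afam_subset G z (mem_inter.1 (hT ▸ mem_insert_of_mem (mem_singleton_self T₂))).1
        have hScard : (Afam G π z ∪ Afam G π z').card ≤ 6 := by
          have hu := card_union_add_card_inter (Afam G π z) (Afam G π z')
          have h4 := Afam_card G (π := π) hreg z
          have h5 := Afam_card G (π := π) hreg z'
          rw [hcard2] at hu
          omega
        have hkey : ∀ (T T' : Finset V), T ∈ π.parts → Afam G π z ∩ Afam G π z' = {T, T'} →
            (Afam G π (wit G T) \ (Afam G π z ∪ Afam G π z')).card ≤ 1 := by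
          intro T T' hTp hTT'
          have hTnot : T ∉ Afam G π (wit G T) := wit_not_mem G (hnd T hTp)
          have hsub1 : (Afam G π (wit G T) ∩ Afam G π z) ∪ (Afam G π (wit G T) ∩ Afam G π z')
              ⊆ Afam G π (wit G T) ∩ (Afam G π z ∪ Afam G π z') := by
            intro x hx
            rw [mem_union, mem_inter, mem_inter] at hx
            rw [mem_inter, mem_union]
            tauto
          have hint : (Afam G π (wit G T) ∩ Afam G π z) ∩ (Afam G π (wit G T) ∩ Afam G π z')
              ⊆ {T'} := by
            intro x hx
            rw [mem_inter, mem_inter, mem_inter] at hx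
            have hx2 : x ∈ Afam G π z ∩ Afam G π z' := mem_inter.2 ⟨hx.1.2, hx.2.2⟩
            rw [hTT', mem_insert, mem_singleton] at hx2
            rcases hx2 with rfl | rfl
            · exact absurd hx.1.1 hTnot
            · exact mem_singleton_self _
          have h4 := card_union_add_card_inter (Afam G π (wit G T) ∩ Afam G π z)
            (Afam G π (wit G T) ∩ Afam G π z')
          have h5 : ((Afam G π (wit G T) ∩ Afam G π z) ∩
              (Afam G π (wit G T) ∩ Afam G π z')).card ≤ 1 := by
            simpa using card_le_card hint
          have h6 := h2 (wit G T) z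
          have h7 := h2 (wit G T) z'
          have h8 := card_le_card hsub1
          have h9 := Afam_card G (π := π) hreg (wit G T)
          have h10 : (Afam G π (wit G T) \ (Afam G π z ∪ Afam G π z')).card =
              (Afam G π (wit G T)).card -
              (Afam G π (wit G T) ∩ (Afam G π z ∪ Afam G π z')).card := by
            rw [← sdiff_inter_self_left, card_sdiff_of_subset inter_subset_left]
          omega
        have hsub : π.parts ⊆ (Afam G π z ∪ Afam G π z') ∪
            ((Afam G π (wit G T₁) \ (Afam G π z ∪ Afam G π z')) ∪
             (Afam G π (wit G T₂) \ (Afam G π z ∪ Afam G π z'))) := by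
          intro P hP
          rw [mem_union]
          by_cases hPS : P ∈ Afam G π z ∪ Afam G π z'
          · exact Or.inl hPS
          · have hPS' := hPS
            rw [mem_union] at hPS'
            push_neg at hPS'
            obtain ⟨Q, hQ, hQp, hdom⟩ := cover2 z z' P hP hPS'.1 hPS'.2
            rw [hT, mem_insert, mem_singleton] at hQ
            rcases hQ with rfl | rfl
            · refine Or.inr (mem_union_left _ (mem_sdiff.2 ⟨?_, hPS⟩))
              apply partner_in_Afam G (wit_spec G (hnd Q hQp)) _ hP
              rwa [union_comm]
            · refine Or.inr (mem_union_right _ (mem_sdiff.2 ⟨?_, hPS⟩))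
              apply partner_in_Afam G (wit_spec G (hnd Q hQp)) _ hP
              rwa [union_comm]
        have hc1 : (Afam G π (wit G T₁) \ (Afam G π z ∪ Afam G π z')).card ≤ 1 :=
          hkey T₁ T₂ hT₁p hT
        have hc2 : (Afam G π (wit G T₂) \ (Afam G π z ∪ Afam G π z')).card ≤ 1 := by
          apply hkey T₂ T₁ hT₂p
          rw [hT]; exact pair_comm T₁ T₂
        calc π.parts.card ≤ _ := card_le_card hsub
          _ ≤ (Afam G π z ∪ Afam G π z').card +
              ((Afam G π (wit G T₁) \ (Afam G π z ∪ Afam G π z')) ∪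
               (Afam G π (wit G T₂) \ (Afam G π z ∪ Afam G π z'))).card := card_union_le _ _
          _ ≤ (Afam G π z ∪ Afam G π z').card +
              ((Afam G π (wit G T₁) \ (Afam G π z ∪ Afam G π z')).card +
               (Afam G π (wit G T₂) \ (Afam G π z ∪ Afam G π z')).card) :=
              add_le_add le_rfl (card_union_le _ _)
          _ ≤ 9 := by omega
    · -- some pair shares exactly 1 part: total ≤ 7 + 2 = 9
      push_neg at h2
      obtain ⟨z, z', hlt⟩ := h2
      have hcard1 : (Afam G π z ∩ Afam G π z').card = 1 := by
        have := card_pos.2 (h1 z z')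
        omega
      obtain ⟨T, hT⟩ := card_eq_one.1 hcard1
      have hTp : T ∈ π.parts := Afam_subset G z (mem_inter.1 (hT ▸ mem_singleton_self T)).1
      have hTnot : T ∉ Afam G π (wit G T) := wit_not_mem G (hnd T hTp)
      have hScard : (Afam G π z ∪ Afam G π z').card ≤ 7 := by
        have hu := card_union_add_card_inter (Afam G π z) (Afam G π z')
        have h4 := Afam_card G (π := π) hreg z
        have h5 := Afam_card G (π := π) hreg z'
        rw [hcard1] at hu
        omega
      have hsub : π.parts ⊆ (Afam G π z ∪ Afam G π z') ∪
          (Afam G π (wit G T) \ (Afam G π z ∪ Afam G π z')) := by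
        intro P hP
        rw [mem_union]
        by_cases hPS : P ∈ Afam G π z ∪ Afam G π z'
        · exact Or.inl hPS
        · have hPS' := hPS
          rw [mem_union] at hPS'
          push_neg at hPS'
          obtain ⟨Q, hQ, hQp, hdom⟩ := cover2 z z' P hP hPS'.1 hPS'.2
          rw [hT, mem_singleton] at hQ
          subst hQ
          refine Or.inr (mem_sdiff.2 ⟨?_, hPS⟩)
          apply partner_in_Afam G (wit_spec G (hnd Q hQp)) _ hP
          rwa [union_comm]
      obtain ⟨a, ha⟩ := h1 (wit G T) z
      obtain ⟨b, hb⟩ := h1 (wit G T) z'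
      rw [mem_inter] at ha hb
      have hab : a ≠ b := by
        rintro rfl
        have h5 : a ∈ Afam G π z ∩ Afam G π z' := mem_inter.2 ⟨ha.2, hb.2⟩
        rw [hT, mem_singleton] at h5
        subst h5
        exact hTnot ha.1
      have hpair : ({a, b} : Finset (Finset V)) ⊆
          Afam G π (wit G T) ∩ (Afam G π z ∪ Afam G π z') := by
        intro x hx
        rw [mem_insert, mem_singleton] at hx
        rcases hx with rfl | rfl
        · exact mem_inter.2 ⟨ha.1, mem_union_left _ ha.2⟩
        · exact mem_inter.2 ⟨hb.1, mem_union_right _ hb.2⟩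
      have h8 : 2 ≤ (Afam G π (wit G T) ∩ (Afam G π z ∪ Afam G π z')).card := by
        have := card_le_card hpair
        rwa [card_pair hab] at this
      have h9 := Afam_card G (π := π) hreg (wit G T)
      have h10 : (Afam G π (wit G T) \ (Afam G π z ∪ Afam G π z')).card =
          (Afam G π (wit G T)).card -
          (Afam G π (wit G T) ∩ (Afam G π z ∪ Afam G π z')).card := by
        rw [← sdiff_inter_self_left, card_sdiff_of_subset inter_subset_left]
      calc π.parts.card ≤ _ := card_le_card hsub
        _ ≤ (Afam G π z ∪ Afam G π z').card +
            (Afam G π (wit G T) \ (Afam G π z ∪ Afam G π z')).card := card_union_le _ _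
        _ ≤ 9 := by omega
  · -- two disjoint A-families: every part lies in one of them, total ≤ 8
    push_neg at h1
    obtain ⟨z, z', hdisj⟩ := h1
    have hsub : π.parts ⊆ Afam G π z ∪ Afam G π z' := by
      intro P hP
      rw [mem_union]
      by_contra h
      push_neg at h
      obtain ⟨Q, hQ, -⟩ := cover2 z z' P hP h.1 h.2
      rw [hdisj] at hQ
      exact notMem_empty Q hQ
    calc π.parts.card ≤ (Afam G π z ∪ Afam G π z').card := card_le_card hsub
      _ ≤ (Afam G π z).card + (Afam G π z').card := card_union_le _ _
      _ ≤ 9 := by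
          have := Afam_card G (π := π) hreg z
          have := Afam_card G (π := π) hreg z'
          omega



set_option maxHeartbeats 2000000 in
lemma lower_bound (hreg : G.IsRegularOfDegree 3) (h6 : 6 ≤ Fintype.card V) :
    ∃ π : Finpartition (univ : Finset V), IsCoalitionPartition G π ∧ π.parts.card = 5 := by
  classical
  haveI hV : Nonempty V := Fintype.card_pos_iff.mp (by omega)
  have v : V := Classical.arbitrary V
  have hvN : v ∉ G.neighborFinset v := SimpleGraph.notMem_neighborFinset_self G v
  have hNcard : (G.neighborFinset v).card = 3 := hreg v
  set N := G.neighborFinset v with hN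
  set R := univ \ insert v N with hR
  have hRcard : R.card = Fintype.card V - 4 := by
    rw [hR, card_sdiff_of_subset (subset_univ _), card_univ, card_insert_of_notMem hvN, hNcard]
  have hR2 : 2 ≤ R.card := by omega
  have hmemR : ∀ u : V, u ∈ R ↔ ¬(u = v ∨ u ∈ N) := by
    intro u; rw [hR, mem_sdiff, mem_insert]; simp
  have hvnotR : v ∉ R := by rw [hmemR]; tauto
  have hxnotR : ∀ x ∈ N, x ∉ R := by intro x hx; rw [hmemR]; tauto
  have hvne : ∀ x ∈ N, v ≠ x := by rintro x hx rfl; exact hvN hx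
  -- the five classes
  set P0 : Finset (Finset V) := insert R (insert {v} (N.image fun x => ({x} : Finset V)))
    with hP0
  have hmemP0 : ∀ s : Finset V, s ∈ P0 ↔ s = R ∨ s = {v} ∨ ∃ x ∈ N, s = {x} := by
    intro s
    rw [hP0, mem_insert, mem_insert, mem_image]
    constructor
    · rintro (rfl | rfl | ⟨x, hx, rfl⟩)
      · tauto
      · tauto
      · exact Or.inr (Or.inr ⟨x, hx, rfl⟩)
    · rintro (rfl | rfl | ⟨x, hx, rfl⟩)
      · tauto
      · tauto
      · exact Or.inr (Or.inr ⟨x, hx, rfl⟩)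
  -- partition axioms
  have hindep : P0.SupIndep id := by
    rw [supIndep_iff_pairwiseDisjoint]
    intro s hs t ht hst
    rw [Finset.mem_coe, hmemP0] at hs ht
    have hds : ∀ x ∈ N, Disjoint R ({x} : Finset V) :=
      fun x hx => disjoint_singleton_right.2 (hxnotR x hx)
    have hdv : Disjoint R ({v} : Finset V) := disjoint_singleton_right.2 hvnotR
    rcases hs with rfl | rfl | ⟨x, hx, rfl⟩ <;> rcases ht with rfl | rfl | ⟨y, hy, rfl⟩
    · exact absurd rfl hst
    · exact hdv
    · exact hds y hy
    · exact hdv.symm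
    · exact absurd rfl hst
    · exact disjoint_singleton.2 (hvne y hy)
    · exact (hds x hx).symm
    · exact disjoint_singleton.2 (Ne.symm (hvne x hx))
    · exact disjoint_singleton.2 (fun h => hst (by rw [h]))
  have hsup : P0.sup id = univ := by
    apply le_antisymm (Finset.sup_le fun s _ => subset_univ s)
    intro u _
    rw [mem_sup]
    by_cases huv : u = v
    · exact ⟨{v}, (hmemP0 _).2 (Or.inr (Or.inl rfl)), by simp [huv]⟩
    · by_cases huN : u ∈ N
      · exact ⟨{u}, (hmemP0 _).2 (Or.inr (Or.inr ⟨u, huN, rfl⟩)), mem_singleton_self u⟩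
      · exact ⟨R, (hmemP0 _).2 (Or.inl rfl), (hmemR u).2 (by tauto)⟩
  have hbot : ⊥ ∉ P0 := by
    intro h
    rw [hmemP0] at h
    rcases h with h | h | ⟨x, -, h⟩
    · rw [← h] at hR2; simp at hR2
    · exact (singleton_ne_empty v) h.symm
    · exact (singleton_ne_empty x) h.symm
  set π : Finpartition (univ : Finset V) := ⟨P0, hindep, hsup, hbot⟩ with hπdef
  -- cardinality
  have hvnotim : ({v} : Finset V) ∉ N.image (fun x => ({x} : Finset V)) := by
    rw [mem_image]
    rintro ⟨x, hx, hxx⟩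
    exact hvne x hx (Finset.singleton_injective hxx).symm
  have hRnot : R ∉ insert ({v} : Finset V) (N.image fun x => ({x} : Finset V)) := by
    intro h
    have h1 : R.card = 1 := by
      rcases mem_insert.1 h with h' | h'
      · rw [h']; exact card_singleton v
      · obtain ⟨x, -, hxx⟩ := mem_image.1 h'
        rw [← hxx]; exact card_singleton x
    omega
  have hcard : P0.card = 5 := by
    rw [hP0, card_insert_of_notMem hRnot, card_insert_of_notMem hvnotim,
      card_image_of_injective _ Finset.singleton_injective, hNcard]
  -- domination facts
  have hnotinNc : ∀ u : V, u ∉ R → u ≠ v → u ∈ N := by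
    intro u h1 h2
    rw [hmemR] at h1
    tauto
  have hdomRv : Dominates G (R ∪ {v}) := by
    intro u hu
    rw [mem_union, mem_singleton] at hu
    push_neg at hu
    have huN : u ∈ N := hnotinNc u hu.1 hu.2
    exact ⟨v, mem_union_right _ (mem_singleton_self v),
      (SimpleGraph.mem_neighborFinset G v u).1 huN⟩
  have hnotdomR : ¬ Dominates G R := by
    intro h
    obtain ⟨u, huR, hadj⟩ := h v hvnotR
    exact hxnotR u ((SimpleGraph.mem_neighborFinset G v u).2 hadj.symm) huR
  have hnotdomv : ¬ Dominates G ({v} : Finset V) := by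
    intro h
    obtain ⟨r, hr⟩ := card_pos.1 (by omega : 0 < R.card)
    have hrv : r ∉ ({v} : Finset V) := by
      rw [mem_singleton]
      rintro rfl
      exact hvnotR hr
    obtain ⟨u, hu, hadj⟩ := h r hrv
    rw [mem_singleton] at hu
    subst hu
    exact hxnotR r ((SimpleGraph.mem_neighborFinset G u r).2 hadj) hr
  have hnotdomx : ∀ x ∈ N, ¬ Dominates G ({x} : Finset V) := by
    intro x hx hdom
    have hbig : 0 < (univ \ insert x (G.neighborFinset x)).card := by
      rw [card_sdiff_of_subset (subset_univ _), card_univ,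
        card_insert_of_notMem (SimpleGraph.notMem_neighborFinset_self G x),
        SimpleGraph.card_neighborFinset_eq_degree, hreg x]
      omega
    obtain ⟨u, hu⟩ := card_pos.1 hbig
    rw [mem_sdiff, mem_insert] at hu
    push_neg at hu
    obtain ⟨w, hw, hadj⟩ := hdom u (by rw [mem_singleton]; exact hu.2.1)
    rw [mem_singleton] at hw
    subst hw
    exact hu.2.2 ((SimpleGraph.mem_neighborFinset G w u).2 hadj)
  have hdomxR : ∀ x ∈ N, Dominates G ({x} ∪ R) := by
    intro x hx u hu
    rw [mem_union, mem_singleton] at hu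
    push_neg at hu
    by_cases huv : u = v
    · subst huv
      exact ⟨x, mem_union_left _ (mem_singleton_self x),
        ((SimpleGraph.mem_neighborFinset G u x).1 hx).symm⟩
    · have huN : u ∈ N := hnotinNc u hu.2 huv
      by_contra hno
      push_neg at hno
      have hxu : x ≠ u := fun h => hu.1 h.symm
      have hsub : G.neighborFinset u ⊆ insert v (N \ ({x, u} : Finset V)) := by
        intro y hy
        have hyAdj : G.Adj u y := (SimpleGraph.mem_neighborFinset G u y).1 hy
        have hynotR : y ∉ R := fun hyR => hno y (mem_union_right _ hyR) hyAdj.symm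
        have hynex : y ≠ x := by
          rintro rfl
          exact hno y (mem_union_left _ (mem_singleton_self y)) hyAdj.symm
        have hyneu : y ≠ u := fun h => G.irrefl (h ▸ hyAdj)
        by_cases hyv : y = v
        · rw [hyv]; exact mem_insert_self v _
        · refine mem_insert_of_mem (mem_sdiff.2 ⟨hnotinNc y hynotR hyv, ?_⟩)
          rw [mem_insert, mem_singleton]
          tauto
      have hc1 := card_le_card hsub
      have hc2 : (N \ ({x, u} : Finset V)).card = 1 := by
        rw [card_sdiff_of_subset (by intro y hy; rw [mem_insert, mem_singleton] at hy
                                     rcases hy with rfl | rfl <;> assumption),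
          card_insert_of_notMem (by rw [mem_singleton]; exact hxu), card_singleton, hNcard]
      have hc3 := card_insert_le v (N \ ({x, u} : Finset V))
      rw [SimpleGraph.card_neighborFinset_eq_degree, hreg u] at hc1
      omega
  -- the coalition partition property
  have hRne : ∀ s : Finset V, s.card = 1 → R ≠ s := by
    intro s hs h
    rw [h, hs] at hR2
    omega
  refine ⟨π, ?_, hcard⟩
  intro X hX
  right
  have hX' : X ∈ P0 := hX
  rw [hmemP0] at hX'
  have hRmem : R ∈ P0 := (hmemP0 R).2 (Or.inl rfl)
  have hvmem : ({v} : Finset V) ∈ P0 := (hmemP0 _).2 (Or.inr (Or.inl rfl))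
  rcases hX' with rfl | rfl | ⟨x, hx, rfl⟩
  · exact ⟨hnotdomR, {v}, hvmem, (hRne {v} (card_singleton v)).symm, hnotdomv, hdomRv⟩
  · exact ⟨hnotdomv, R, hRmem, hRne {v} (card_singleton v), hnotdomR,
      by rw [union_comm]; exact hdomRv⟩
  · exact ⟨hnotdomx x hx, R, hRmem, hRne _ (card_singleton x), hnotdomR, hdomxR x hx⟩

end CoalitionAux

theorem stmt13 {V : Type*} [Fintype V] [DecidableEq V] (G : SimpleGraph V) [DecidableRel G.Adj]
    [DecidableRel G.Adj] (hreg : G.IsRegularOfDegree 3) (h6 : 6 ≤ Fintype.card V) :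
    5 ≤ coalitionNumber V G ∧ coalitionNumber V G ≤ 9 := by
  classical
  obtain ⟨π₀, hπ₀, hcard₀⟩ := CoalitionAux.lower_bound G hreg h6
  have hbdd : BddAbove {k | ∃ π : Finpartition (univ : Finset V),
      IsCoalitionPartition G π ∧ π.parts.card = k} := by
    refine ⟨Fintype.card V, ?_⟩
    rintro k ⟨π, -, rfl⟩
    simpa [card_univ] using π.card_parts_le_card
  constructor
  · exact le_csSup hbdd ⟨π₀, hπ₀, hcard₀⟩
  · refine csSup_le ⟨5, π₀, hπ₀, hcard₀⟩ ?_
    rintro k ⟨π, hπ, rfl⟩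
    exact CoalitionAux.upper_bound G hreg h6 hπ
end

section
/- If π is a domatic partition of a graph G into k dominating sets each of which is minimal and of size at least 2, then C(G) ≥ 2k: splitting each class into two nonempty parts yields a coalition partition with 2k classes. -/
open Finset

lemma splitPair_ne {V : Type*} [DecidableEq V] {X : Finset V} {x : V} :
    ({x} : Finset V) ≠ X \ {x} := by
  intro h
  have : x ∈ X \ {x} := h ▸ mem_singleton_self x
  simp at this

def splitPair {V : Type*} [DecidableEq V] (X : Finset V) (x : V) (hx : x ∈ X)
    (h2 : 2 ≤ X.card) : Finpartition X where
  parts := {{x}, X \ {x}}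
  supIndep := by
    rw [Finset.supIndep_pair splitPair_ne]
    simp [Finset.disjoint_sdiff]
  sup_parts := by
    simp only [sup_insert, sup_singleton, id_eq, sup_eq_union]
    rw [union_comm, sdiff_union_of_subset (by simpa using hx)]
  bot_notMem := by
    simp only [bot_eq_empty, mem_insert, mem_singleton]
    push_neg
    constructor
    · exact (singleton_nonempty x).ne_empty.symm
    · intro h
      have : (X \ {x}).card = 0 := by rw [← h]; simp
      rw [card_sdiff_of_subset (by simpa using hx)] at this
      simp at this
      omega

lemma splitPair_parts {V : Type*} [DecidableEq V] (X : Finset V) (x : V) (hx : x ∈ X)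
    (h2 : 2 ≤ X.card) : (splitPair X x hx h2).parts = {{x}, X \ {x}} := rfl

lemma splitPair_card {V : Type*} [DecidableEq V] (X : Finset V) (x : V) (hx : x ∈ X)
    (h2 : 2 ≤ X.card) : (splitPair X x hx h2).parts.card = 2 := by
  rw [splitPair_parts, card_insert_of_notMem (by simpa using splitPair_ne), card_singleton]

theorem stmt14 {V : Type*} [Fintype V] [DecidableEq V] (G : SimpleGraph V)
    (π : Finpartition (univ : Finset V))
    (hdom : ∀ X ∈ π.parts,
      Dominates G X ∧ (∀ X' ⊂ X, ¬ Dominates G X') ∧ 2 ≤ X.card) :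
    2 * π.parts.card ≤ coalitionNumber V G := by
  have hne : ∀ X ∈ π.parts, X.Nonempty := fun X hX =>
    Finset.card_pos.mp (by have := (hdom X hX).2.2; omega)
  set Q : ∀ X ∈ π.parts, Finpartition X := fun X hX =>
    splitPair X (hne X hX).choose (hne X hX).choose_spec (hdom X hX).2.2 with hQ
  set π' := π.bind Q with hπ'
  have hcard : π'.parts.card = 2 * π.parts.card := by
    rw [hπ', Finpartition.card_bind]
    rw [Finset.sum_congr rfl (fun A _ => splitPair_card _ _ _ _)]
    simp [mul_comm]
  have hcoal : IsCoalitionPartition G π' := by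
    intro Y hY
    rw [hπ', Finpartition.mem_bind] at hY
    obtain ⟨X, hX, hYX⟩ := hY
    set x := (hne X hX).choose with hxdef
    have hx : x ∈ X := (hne X hX).choose_spec
    have h2 := (hdom X hX).2.2
    have hXdom := (hdom X hX).1
    have hmin := (hdom X hX).2.1
    have hYX' : Y = {x} ∨ Y = X \ {x} := by
      simpa [hQ, splitPair_parts, Finset.mem_insert, Finset.mem_singleton] using hYX
    have hunion : ({x} : Finset V) ∪ (X \ {x}) = X := by
      rw [union_comm, sdiff_union_of_subset (by simpa using hx)]
    have hsub1 : ({x} : Finset V) ⊂ X := by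
      constructor
      · simpa using hx
      · intro h
        have : X.card ≤ 1 := le_trans (card_le_card h) (by simp)
        omega
    have hsub2 : X \ {x} ⊂ X := by
      apply Finset.sdiff_ssubset (by simpa using hx) (singleton_nonempty x)
    have hmem1 : ({x} : Finset V) ∈ π'.parts := by
      rw [hπ', Finpartition.mem_bind]
      exact ⟨X, hX, by simp [hQ, splitPair_parts, ← hxdef]⟩
    have hmem2 : X \ {x} ∈ π'.parts := by
      rw [hπ', Finpartition.mem_bind]
      exact ⟨X, hX, by simp [hQ, splitPair_parts, ← hxdef]⟩
    right
    rcases hYX' with rfl | rfl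
    · exact ⟨hmin _ hsub1, X \ {x}, hmem2, splitPair_ne.symm, hmin _ hsub2,
        by rwa [hunion]⟩
    · refine ⟨hmin _ hsub2, {x}, hmem1, splitPair_ne, hmin _ hsub1, ?_⟩
      rwa [Finset.union_comm, hunion]
  have hbdd : BddAbove {k | ∃ π : Finpartition (univ : Finset V),
      IsCoalitionPartition G π ∧ π.parts.card = k} := by
    refine ⟨Fintype.card V, ?_⟩
    rintro k ⟨ρ, _, rfl⟩
    simpa using ρ.card_parts_le_card
  rw [coalitionNumber, ← hcard]
  exact le_csSup hbdd ⟨π', hcoal, rfl⟩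
end

section
/- In any graph G with domination number γ(G) ≥ 3, no two singleton classes of a coalition partition form a coalition; consequently, in a coalition partition of such a G consisting of s singleton classes and t non-singleton classes, every singleton class must form a coalition with some non-singleton class, and hence s ≤ t·(Δ(G)+1). -/
open Finset

theorem stmt16 {V : Type*} [Fintype V] [DecidableEq V] (G : SimpleGraph V) [DecidableRel G.Adj]
    (hγ : ∀ S : Finset V, Dominates G S → 3 ≤ S.card)
    (π : Finpartition (univ : Finset V)) (hπ : IsCoalitionPartition G π) :
    (∀ X ∈ π.parts, ∀ Y ∈ π.parts, X.card = 1 → Y.card = 1 → X ≠ Y → ¬ FormsCoalition G X Y) ∧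
    (∀ X ∈ π.parts, X.card = 1 → ∃ Y ∈ π.parts, Y ≠ X ∧ Y.card ≠ 1 ∧ FormsCoalition G X Y) ∧
    (π.parts.filter (fun X => X.card = 1)).card ≤
      (π.parts.filter (fun X => X.card ≠ 1)).card * (G.maxDegree + 1) := by
  classical
  have key : ∀ X ∈ π.parts, X.card = 1 →
      ∃ Y ∈ π.parts, Y ≠ X ∧ Y.card ≠ 1 ∧ FormsCoalition G X Y := by
    intro X hX hX1
    rcases hπ X hX with ⟨_, hdom⟩ | ⟨hnX, Y, hY, hYX, hnY, hdXY⟩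
    · exact absurd (hγ X hdom) (by omega)
    · refine ⟨Y, hY, hYX, ?_, hnX, hnY, hdXY⟩
      intro hY1
      have h3 := hγ _ hdXY
      have h2 : (X ∪ Y).card ≤ 2 := le_trans (card_union_le X Y) (by omega)
      omega
  refine ⟨?_, key, ?_⟩
  · intro X _ Y _ hX1 hY1 _ hco
    have h3 := hγ _ hco.2.2
    have h2 := card_union_le X Y
    omega
  · set Sg := π.parts.filter (fun X => X.card = 1) with hSg
    set T := π.parts.filter (fun X => X.card ≠ 1) with hT
    set f : Finset V → Finset V := fun X =>
      if h : ∃ Y ∈ π.parts, Y ≠ X ∧ Y.card ≠ 1 ∧ FormsCoalition G X Y then h.choose else ∅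
      with hf
    have hfspec : ∀ X ∈ Sg, f X ∈ π.parts ∧ (f X).card ≠ 1 ∧ FormsCoalition G X (f X) := by
      intro X hX
      simp only [hSg, mem_filter] at hX
      have h := key X hX.1 hX.2
      rw [hf]; dsimp only
      rw [dif_pos h]
      obtain ⟨hY, _, h2, h3⟩ := h.choose_spec
      exact ⟨hY, h2, h3⟩
    have himg : Sg.image f ⊆ T := by
      intro Y hY
      obtain ⟨X, hX, rfl⟩ := mem_image.mp hY
      have h := hfspec X hX
      simp only [hT, mem_filter]
      exact ⟨h.1, h.2.1⟩
    have hfib : ∀ Y ∈ Sg.image f, (Sg.filter (fun X => f X = Y)).card ≤ G.maxDegree + 1 := by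
      intro Y hYimg
      obtain ⟨X0, hX0, hfX0⟩ := mem_image.mp hYimg
      have hndY : ¬ Dominates G Y := by
        have h := (hfspec X0 hX0).2.2
        rw [hfX0] at h
        exact h.2.1
      rw [Dominates] at hndY; push_neg at hndY
      obtain ⟨v, hvY, hv⟩ := hndY
      have hle : (Sg.filter (fun X => f X = Y)).card ≤ (insert v (G.neighborFinset v)).card := by
        apply Finset.card_le_card_of_injOn (fun X => if h : X.Nonempty then h.choose else v)
        · intro X hX
          replace hX : X ∈ Sg.filter (fun X => f X = Y) := hX
          simp only [mem_filter, hSg] at hX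
          obtain ⟨⟨hXp, hX1⟩, hfXY⟩ := hX
          have hne : X.Nonempty := card_pos.mp (by omega)
          simp only [dif_pos hne]
          set x := hne.choose with hx
          have hxX : x ∈ X := hne.choose_spec
          have hXeq : X = {x} := by
            obtain ⟨a, ha⟩ := card_eq_one.mp hX1
            subst ha
            simp_all [Finset.mem_singleton]
          have hdXY : Dominates G (X ∪ Y) := by
            have h := (hfspec X (by simp [hSg, mem_filter, hXp, hX1])).2.2
            rw [hfXY] at h
            exact h.2.2
          by_cases hvXY : v ∈ X ∪ Y
          · have hvX : v ∈ X := by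
              rcases mem_union.mp hvXY with h | h
              · exact h
              · exact absurd h hvY
            rw [hXeq, mem_singleton] at hvX
            rw [← hvX]
            exact mem_insert_self _ _
          · obtain ⟨u, huXY, hadj⟩ := hdXY v hvXY
            rcases mem_union.mp huXY with h | h
            · rw [hXeq, mem_singleton] at h
              subst h
              apply mem_insert_of_mem
              rw [SimpleGraph.mem_neighborFinset]
              exact hadj.symm
            · exact absurd hadj (hv u h)
        · intro X1 hX1 X2 hX2 heq
          simp only [coe_filter, Set.mem_setOf_eq, hSg, mem_filter] at hX1 hX2
          have hne1 : X1.Nonempty := card_pos.mp (by omega)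
          have hne2 : X2.Nonempty := card_pos.mp (by omega)
          simp only [dif_pos hne1, dif_pos hne2] at heq
          by_contra hne
          have hdisj := π.disjoint hX1.1.1 hX2.1.1 hne
          have hm1 : hne1.choose ∈ X1 := hne1.choose_spec
          have hm2 : hne1.choose ∈ X2 := heq ▸ hne2.choose_spec
          exact (Finset.disjoint_left.mp hdisj hm1) hm2
      have hcard : (insert v (G.neighborFinset v)).card ≤ G.maxDegree + 1 := by
        have h1 := Finset.card_insert_le v (G.neighborFinset v)
        have h2 : (G.neighborFinset v).card = G.degree v := G.card_neighborFinset_eq_degree v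
        have h3 := G.degree_le_maxDegree v
        omega
      omega
    calc Sg.card ≤ (G.maxDegree + 1) * (Sg.image f).card :=
          card_le_mul_card_image _ _ hfib
      _ ≤ (G.maxDegree + 1) * T.card := Nat.mul_le_mul_left _ (card_le_card himg)
      _ = T.card * (G.maxDegree + 1) := mul_comm _ _
end
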